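/- If λ_1, ..., λ_{n-1} ≥ 0 satisfy ∑_{j=1}^{n-1} λ_j ≤ 1/2, then the symmetric matrix P(Λ) = QΛQ^T is doubly stochastic. -/

import Mathlib

open Real Matrix Finset

lemma exp_sum_zero' (n j : ℕ) (h1 : 0 < j) (h2 : j < n) :
    ∑ l : Fin n, Complex.exp ((2 * π * l * j / n : ℝ) * Complex.I) = 0 := by
  have hn : (0:ℝ) < n := by exact_mod_cast h1.trans h2
  have hn0 : (n:ℂ) ≠ 0 := by exact_mod_cast hn.ne'
  set ζ : ℂ := Complex.exp ((2 * π * j / n : ℝ) * Complex.I) with hζ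
  have hζn : ζ ^ n = 1 := by
    rw [hζ, ← Complex.exp_nat_mul]
    have : (n : ℂ) * (((2 * π * j / n : ℝ)) * Complex.I) = (j : ℤ) * (2 * ↑π * Complex.I) := by
      push_cast; field_simp
    rw [this, Complex.exp_int_mul_two_pi_mul_I]
  have hζ1 : ζ ≠ 1 := by
    rw [hζ, Ne, Complex.exp_eq_one_iff]
    rintro ⟨m, hm⟩
    have hm' : ((2 * π * j / n : ℝ) : ℂ) * Complex.I = ((m * (2 * π) : ℝ) : ℂ) * Complex.I := by
      rw [hm]; push_cast; ring
    have := mul_right_cancel₀ Complex.I_ne_zero hm'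
    have hr : (2 * π * j / n : ℝ) = m * (2 * π) := by exact_mod_cast this
    have hπ := Real.pi_pos
    have hj : (j : ℝ) = m * n := by
      field_simp at hr
      nlinarith [hr]
    have h0 : (0:ℝ) < (m:ℝ) * n := by rw [← hj]; exact_mod_cast h1
    have h1' : (m:ℝ) * n < 1 * n := by rw [← hj]; simpa using (show (j:ℝ) < n by exact_mod_cast h2)
    have hm1 : (m:ℝ) < 1 := lt_of_mul_lt_mul_right h1' hn.le
    have hm0 : (0:ℝ) < (m:ℝ) := by nlinarith
    have a1 : (0:ℤ) < m := by exact_mod_cast hm0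
    have a2 : m < 1 := by exact_mod_cast hm1
    omega
  have hsum : ∑ l : Fin n, ζ ^ (l:ℕ) = 0 := by
    rw [Fin.sum_univ_eq_sum_range, geom_sum_eq hζ1, hζn]
    simp
  calc ∑ l : Fin n, Complex.exp ((2 * π * l * j / n : ℝ) * Complex.I)
      = ∑ l : Fin n, ζ ^ (l:ℕ) := by
        refine Finset.sum_congr rfl fun l _ => ?_
        rw [hζ, ← Complex.exp_nat_mul]
        congr 1
        push_cast; field_simp
    _ = 0 := hsum

lemma cos_sin_sum_zero' (n j : ℕ) (h1 : 0 < j) (h2 : j < n) :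
    (∑ l : Fin n, Real.cos (2 * π * l * j / n)) = 0 ∧
    (∑ l : Fin n, Real.sin (2 * π * l * j / n)) = 0 := by
  have h := exp_sum_zero' n j h1 h2
  constructor
  · have := congrArg Complex.re h
    rw [Complex.re_sum] at this
    exact Eq.trans (Finset.sum_congr rfl fun l _ => (Complex.exp_ofReal_mul_I_re _).symm) this
  · have := congrArg Complex.im h
    rw [Complex.im_sum] at this
    exact Eq.trans (Finset.sum_congr rfl fun l _ => (Complex.exp_ofReal_mul_I_im _).symm) this

theorem stmt_11 (n : ℕ) (hn : 1 ≤ n)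
    (Q : Matrix (Fin n) (Fin n) ℝ)
    (hQ : ∀ k j : Fin n,
      Q k j = Real.sqrt (2 / n) * Real.sin (2 * Real.pi * k * j / n + Real.pi / 4))
    (lam : Fin n → ℝ) (hlam0 : lam ⟨0, by omega⟩ = 1)
    (hpos : ∀ j : Fin n, j ≠ ⟨0, by omega⟩ → 0 ≤ lam j)
    (hsum : ∑ j ∈ Finset.univ \ {(⟨0, by omega⟩ : Fin n)}, lam j ≤ 1 / 2) :
    (Q * Matrix.diagonal lam * Qᵀ)ᵀ = Q * Matrix.diagonal lam * Qᵀ ∧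
    (∀ k l : Fin n, 0 ≤ (Q * Matrix.diagonal lam * Qᵀ) k l) ∧
    (∀ k : Fin n, ∑ l : Fin n, (Q * Matrix.diagonal lam * Qᵀ) k l = 1) ∧
    (∀ l : Fin n, ∑ k : Fin n, (Q * Matrix.diagonal lam * Qᵀ) k l = 1) := by
  set j0 : Fin n := ⟨0, by omega⟩ with hj0
  have hn0 : (0:ℝ) < n := by exact_mod_cast hn
  have hsn : (0:ℝ) < Real.sqrt n := Real.sqrt_pos.mpr hn0
  have hsns : Real.sqrt n * Real.sqrt n = n := Real.mul_self_sqrt hn0.le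
  set P := Q * Matrix.diagonal lam * Qᵀ with hP
  -- basic entry formula
  have hEntry : ∀ k l, P k l = ∑ j, Q k j * lam j * Q l j := by
    intro k l
    rw [hP, Matrix.mul_apply]
    refine Finset.sum_congr rfl fun j _ => ?_
    rw [Matrix.mul_diagonal, Matrix.transpose_apply]
  -- value at column 0
  have hQ0 : ∀ k, Q k j0 = 1 / Real.sqrt n := by
    intro k
    rw [hQ]
    have hjv : ((j0 : ℕ) : ℝ) = 0 := by simp [hj0]
    rw [hjv]
    rw [show 2 * Real.pi * (k:ℕ) * 0 / n + Real.pi / 4 = Real.pi / 4 by ring,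
      Real.sin_pi_div_four,
      Real.sqrt_div (by norm_num : (0:ℝ) ≤ 2) n]
    have h22 : Real.sqrt 2 * Real.sqrt 2 = 2 := Real.mul_self_sqrt (by norm_num)
    field_simp
    nlinarith [Real.sqrt_nonneg 2]
  -- column sums of Q
  have hSl0 : ∑ l : Fin n, Q l j0 = Real.sqrt n := by
    simp [hQ0]
    field_simp
    rw [Real.sq_sqrt hn0.le]

  have hSl : ∀ j : Fin n, j ≠ j0 → ∑ l : Fin n, Q l j = 0 := by
    intro j hj
    have hj1 : 0 < (j:ℕ) := Nat.pos_of_ne_zero (fun h => hj (Fin.ext h))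
    obtain ⟨hc, hs⟩ := cos_sin_sum_zero' n j hj1 j.isLt
    calc ∑ l : Fin n, Q l j
        = Real.sqrt (2 / n) * ((∑ l : Fin n, Real.sin (2 * π * l * j / n)) * Real.cos (π/4)
            + (∑ l : Fin n, Real.cos (2 * π * l * j / n)) * Real.sin (π/4)) := by
          have he : ∀ l : Fin n, Q l j = Real.sqrt (2 / n) *
              (Real.sin (2 * π * l * j / n) * Real.cos (π/4)
                + Real.cos (2 * π * l * j / n) * Real.sin (π/4)) := fun l => by
            rw [hQ, Real.sin_add]
          rw [Finset.sum_congr rfl fun l _ => he l, ← Finset.mul_sum,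
            Finset.sum_add_distrib, ← Finset.sum_mul, ← Finset.sum_mul]
      _ = 0 := by rw [hc, hs]; ring
  -- bound on entries of Q
  have hsq2 : Real.sqrt (2 / n) * Real.sqrt (2 / n) = 2 / n :=
    Real.mul_self_sqrt (by positivity)
  have hbound : ∀ k j : Fin n, |Q k j| ≤ Real.sqrt (2 / n) := by
    intro k j
    rw [hQ, abs_mul, abs_of_nonneg (Real.sqrt_nonneg _)]
    calc Real.sqrt (2 / n) * |Real.sin (2 * π * k * j / n + π / 4)|
        ≤ Real.sqrt (2 / n) * 1 :=
          mul_le_mul_of_nonneg_left (Real.abs_sin_le_one _) (Real.sqrt_nonneg _)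
      _ = Real.sqrt (2 / n) := mul_one _
  -- symmetry
  have hsym : Pᵀ = P := by
    rw [hP, Matrix.transpose_mul, Matrix.transpose_mul, Matrix.transpose_transpose,
      Matrix.diagonal_transpose, ← Matrix.mul_assoc]
  -- row sums
  have hrow : ∀ k, ∑ l, P k l = 1 := by
    intro k
    have h1 : ∑ l, P k l = ∑ j, Q k j * lam j * (∑ l, Q l j) := by
      simp_rw [hEntry]
      rw [Finset.sum_comm]
      exact Finset.sum_congr rfl fun j _ => by rw [Finset.mul_sum]
    rw [h1, Finset.sum_eq_single j0]
    · rw [hQ0, hlam0, hSl0]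
      field_simp
    · intro j _ hj
      rw [hSl j hj, mul_zero]
    · intro h; exact absurd (Finset.mem_univ j0) h
  -- nonnegativity
  have hnn : ∀ k l, 0 ≤ P k l := by
    intro k l
    rw [hEntry]
    have hsplit : ∑ j, Q k j * lam j * Q l j
        = Q k j0 * lam j0 * Q l j0 + ∑ j ∈ Finset.univ.erase j0, Q k j * lam j * Q l j :=
      (Finset.add_sum_erase _ _ (Finset.mem_univ j0)).symm
    rw [hsplit]
    have h0 : Q k j0 * lam j0 * Q l j0 = 1 / n := by
      rw [hQ0, hQ0, hlam0]
      field_simp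
      rw [Real.sq_sqrt hn0.le]
    have hterm : ∀ j ∈ Finset.univ.erase j0, -(2 / n * lam j) ≤ Q k j * lam j * Q l j := by
      intro j hj
      have hjne : j ≠ j0 := Finset.ne_of_mem_erase hj
      have hl : 0 ≤ lam j := hpos j hjne
      have habs : |Q k j * Q l j| ≤ 2 / n := by
        rw [abs_mul]
        calc |Q k j| * |Q l j| ≤ Real.sqrt (2/n) * Real.sqrt (2/n) :=
              mul_le_mul (hbound k j) (hbound l j) (abs_nonneg _) (Real.sqrt_nonneg _)
          _ = 2 / n := hsq2
      have h2 : -(2 / n) ≤ Q k j * Q l j := by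
        have := neg_abs_le (Q k j * Q l j)
        linarith
      have : Q k j * lam j * Q l j = lam j * (Q k j * Q l j) := by ring
      rw [this]
      calc -(2 / n * lam j) = lam j * (-(2/n)) := by ring
        _ ≤ lam j * (Q k j * Q l j) := mul_le_mul_of_nonneg_left h2 hl
    have hsum2 : ∑ j ∈ Finset.univ.erase j0, lam j ≤ 1 / 2 := by
      rw [← Finset.sdiff_singleton_eq_erase]
      exact hsum
    have hge : -(1 / n) ≤ ∑ j ∈ Finset.univ.erase j0, Q k j * lam j * Q l j := by
      calc -(1 / n) ≤ -(2 / n * ∑ j ∈ Finset.univ.erase j0, lam j) := by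
            rw [neg_le_neg_iff]
            calc 2 / n * ∑ j ∈ Finset.univ.erase j0, lam j ≤ 2 / n * (1/2) :=
                  mul_le_mul_of_nonneg_left hsum2 (by positivity)
              _ = 1 / n := by ring
        _ = ∑ j ∈ Finset.univ.erase j0, -(2 / n * lam j) := by
            rw [Finset.mul_sum, ← Finset.sum_neg_distrib]
        _ ≤ _ := Finset.sum_le_sum hterm
    linarith [h0, hge]
  refine ⟨hsym, hnn, hrow, fun l => ?_⟩
  calc ∑ k, P k l = ∑ k, Pᵀ l k := by
        exact Finset.sum_congr rfl fun k _ => (Matrix.transpose_apply P l k).symm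
    _ = ∑ k, P l k := by rw [hsym]
    _ = 1 := hrow l
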